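/- arXiv:1001.2767 — 10 statements merged into one kernel-verified Lean document; each statement's English description precedes it below -/
import Mathlib

section
/- Let G'_{n,α} be the (n+1)×(n+1) matrix with entries (G')_{i,j} = α^{|i-j|} for i,j ∈ {0,…,n} and 0 < α < 1. Then det(G'_{n,α}) = (1-α²)^n, and in particular G'_{n,α} is invertible. -/
lemma det_geom_aux (α : ℝ) (h0 : 0 < α) :
    ∀ n (G : Matrix (Fin (n + 1)) (Fin (n + 1)) ℝ),
      (∀ i j, G i j = α ^ ((i : ℤ) - (j : ℤ)).natAbs) → G.det = (1 - α ^ 2) ^ n := by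
  intro n
  induction n with
  | zero =>
    intro G hG
    rw [Matrix.det_fin_one, hG]
    simp
  | succ n ih =>
    intro G hG
    have h01 : (0 : Fin (n + 2)) ≠ 1 := by simp
    set B := G.updateRow 0 (G 0 + (-α) • G 1) with hBdef
    have hdet : B.det = G.det := Matrix.det_updateRow_add_smul_self G h01 (-α)
    have hB0 : ∀ j : Fin (n + 2), B 0 j = if j = 0 then 1 - α ^ 2 else 0 := by
      intro j
      have : B 0 j = G 0 j + (-α) * G 1 j := by
        rw [hBdef, Matrix.updateRow_self]; simp
      rw [this, hG, hG]
      by_cases hj : j = 0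
      · subst hj; simp; ring
      · simp only [if_neg hj]
        have hj1 : 1 ≤ (j : ℕ) := Nat.one_le_iff_ne_zero.mpr (by
          intro h; exact hj (Fin.ext (by rw [h, Fin.val_zero])))
        have e0 : (((0 : Fin (n+2)) : ℤ) - (j : ℤ)).natAbs = (j : ℕ) := by
          simp
        have e1 : (((1 : Fin (n+2)) : ℤ) - (j : ℤ)).natAbs = (j : ℕ) - 1 := by
          have : ((1 : Fin (n+2)) : ℤ) = 1 := by norm_num
          rw [this]
          omega
        rw [e0, e1]
        have : α ^ (j : ℕ) = α * α ^ ((j : ℕ) - 1) := by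
          rw [← pow_succ']
          congr 1
          omega
        rw [this]; ring
    have hBrow : ∀ i : Fin (n + 2), i ≠ 0 → ∀ j, B i j = G i j := by
      intro i hi j
      rw [hBdef, Matrix.updateRow_ne hi]
    have hminor : ∀ i j : Fin (n + 1),
        B.submatrix Fin.succ (Fin.succAbove 0) i j = α ^ ((i : ℤ) - (j : ℤ)).natAbs := by
      intro i j
      have : B.submatrix Fin.succ (Fin.succAbove 0) i j = B i.succ j.succ := by
        simp [Matrix.submatrix_apply, Fin.zero_succAbove]
      rw [this, hBrow _ (Fin.succ_ne_zero i), hG]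
      congr 1
      simp [Fin.val_succ]
    have hsum : B.det = (1 - α ^ 2) * (B.submatrix Fin.succ (Fin.succAbove 0)).det := by
      rw [Matrix.det_succ_row_zero]
      rw [Finset.sum_eq_single (0 : Fin (n + 2))]
      · rw [hB0]; simp
      · intro j _ hj
        rw [hB0, if_neg hj]; ring
      · intro h; exact absurd (Finset.mem_univ _) h
    rw [← hdet, hsum, ih _ hminor, pow_succ]
    ring

/-- `det G'_{n,α} = (1-α²)^n`, where `G'` is the `(n+1)×(n+1)` matrix with
entries `α^{|i-j|}`; in particular `G'` is invertible. -/
theorem det_geom_prime (n : ℕ) (α : ℝ) (h0 : 0 < α) (h1 : α < 1)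
    (G : Matrix (Fin (n + 1)) (Fin (n + 1)) ℝ)
    (hG : ∀ i j, G i j = α ^ ((i : ℤ) - (j : ℤ)).natAbs) :
    G.det = (1 - α ^ 2) ^ n ∧ IsUnit G.det := by
  have hd := det_geom_aux α h0 n G hG
  refine ⟨hd, ?_⟩
  rw [hd]
  have h2 : α ^ 2 < 1 := by nlinarith
  exact (pow_ne_zero n (by linarith)).isUnit
end

section
/- The range-restricted geometric mechanism matrix G_{n,α} has positive determinant: for the (n+1)×(n+1) matrix with (i,j)-entry equal to α^{|i-j|}/(1+α) if j ∈ {0,n} and ((1-α)/(1+α))·α^{|i-j|} otherwise, det(G_{n,α}) > 0. -/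
open Matrix

/-- Kac–Murdock–Szegő matrix. -/
noncomputable def KMS (n : ℕ) (α : ℝ) : Matrix (Fin (n + 1)) (Fin (n + 1)) ℝ :=
  fun i j => α ^ ((i : ℤ) - (j : ℤ)).natAbs

lemma det_KMS (n : ℕ) (α : ℝ) : (KMS n α).det = (1 - α ^ 2) ^ n := by
  induction n with
  | zero => simp [KMS, Matrix.det_fin_one]
  | succ n ih =>
    have h01 : (0 : Fin (n + 2)) ≠ 1 := by simp
    set M : Matrix (Fin (n + 2)) (Fin (n + 2)) ℝ :=
      (KMS (n + 1) α).updateRow 0 (KMS (n + 1) α 0 + (-α) • KMS (n + 1) α 1) with hM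
    have hdet : M.det = (KMS (n + 1) α).det :=
      Matrix.det_updateRow_add_smul_self _ h01 _
    have hM0 : ∀ j : Fin (n + 2), M 0 j = if (j : ℕ) = 0 then 1 - α ^ 2 else 0 := by
      intro j
      have : M 0 j = KMS (n + 1) α 0 j + (-α) * KMS (n + 1) α 1 j := by
        simp [hM]
      rw [this]
      simp only [KMS]
      have h0j : ((0 : Fin (n + 2)) : ℤ) = 0 := by simp
      have h1j : ((1 : Fin (n + 2)) : ℤ) = 1 := by simp
      rw [h0j, h1j]
      rcases Nat.eq_zero_or_pos (j : ℕ) with hj | hj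
      · have hjz : ((j : Fin (n+2)) : ℤ) = 0 := by exact_mod_cast hj
        rw [hjz, if_pos hj]
        norm_num
        ring
      · have hjz : 1 ≤ ((j : Fin (n+2)) : ℤ) := by exact_mod_cast hj
        have e1 : ((0 : ℤ) - (j : ℤ)).natAbs = (j : ℕ) := by omega
        have e2 : ((1 : ℤ) - (j : ℤ)).natAbs = (j : ℕ) - 1 := by omega
        rw [e1, e2, if_neg (by omega)]
        have e3 : α ^ (j : ℕ) = α ^ ((j : ℕ) - 1) * α := by
          rw [← pow_succ]; congr 1; omega
        rw [e3]; ring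
    have hsub : M.submatrix Fin.succ Fin.succ = KMS n α := by
      ext i j
      have hne : (i.succ : Fin (n + 2)) ≠ 0 := Fin.succ_ne_zero i
      simp only [Matrix.submatrix_apply, hM, Matrix.updateRow_ne hne, KMS]
      congr 1
      simp only [Fin.val_succ]
      push_cast
      omega
    rw [← hdet, Matrix.det_succ_row_zero]
    rw [Finset.sum_eq_single 0]
    · rw [hM0 0, if_pos (by simp)]
      have : (0 : Fin (n + 2)).succAbove = Fin.succ := by
        ext i : 1
        simp [Fin.succAbove]
      rw [this, hsub, ih]
      simp only [Fin.val_zero, pow_zero, one_mul, pow_succ]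
      ring
    · intro j _ hj
      rw [hM0 j, if_neg (fun h => hj (Fin.ext (by simp [h])))]
      ring
    · intro h; exact absurd (Finset.mem_univ _) h

/-- The range-restricted geometric mechanism matrix `G_{n,α}` has positive
determinant. -/
theorem det_geom_pos (n : ℕ) (hn : 1 ≤ n) (α : ℝ) (h0 : 0 < α) (h1 : α < 1)
    (G : Matrix (Fin (n + 1)) (Fin (n + 1)) ℝ)
    (hG : ∀ i j, G i j =
      if (j : ℕ) = 0 ∨ (j : ℕ) = n then α ^ ((i : ℤ) - (j : ℤ)).natAbs / (1 + α)
      else ((1 - α) / (1 + α)) * α ^ ((i : ℤ) - (j : ℤ)).natAbs) :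
    0 < G.det := by
  set d : Fin (n + 1) → ℝ :=
    fun j => if (j : ℕ) = 0 ∨ (j : ℕ) = n then 1 / (1 + α) else (1 - α) / (1 + α) with hd
  have hGd : G = KMS n α * Matrix.diagonal d := by
    ext i j
    rw [Matrix.mul_diagonal, hG]
    simp only [hd, KMS]
    split <;> ring
  have hα1 : (0 : ℝ) < 1 + α := by linarith
  have hdpos : ∀ j, 0 < d j := by
    intro j
    simp only [hd]
    split
    · positivity
    · have : (0 : ℝ) < 1 - α := by linarith
      positivity
  rw [hGd, Matrix.det_mul, Matrix.det_diagonal, det_KMS]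
  have h1 : (0 : ℝ) < (1 - α ^ 2) ^ n := by
    have : (0 : ℝ) < 1 - α ^ 2 := by nlinarith
    positivity
  exact mul_pos h1 (Finset.prod_pos fun j _ => hdpos j)
end

section
/- Replacing the first column: for the matrix G'_{n,α} with entries α^{|i-j|} and any vector x = (x_1,…,x_n)ᵀ, the determinant of the matrix obtained by replacing the first column of G'_{n,α} by x equals (1-α²)^{n-2}·(x_1 - α·x_2). In particular it is positive if and only if x_1 > α·x_2. -/
open Matrix

lemma key (α : ℝ) : ∀ (n : ℕ) (G : Matrix (Fin (n + 2)) (Fin (n + 2)) ℝ)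
    (hG : ∀ i j, G i j = α ^ ((i : ℤ) - (j : ℤ)).natAbs) (x : Fin (n + 2) → ℝ),
    (G.updateCol 0 x).det = (1 - α ^ 2) ^ n * (x 0 - α * x 1) := by
  intro n
  induction n with
  | zero =>
    intro G hG x
    rw [det_fin_two]
    simp [updateCol_apply, hG]
  | succ n ih =>
    intro G hG x
    set M := G.updateCol 0 x with hM
    set L : Fin (n + 3) := Fin.last (n + 2) with hL
    set P : Fin (n + 3) := (Fin.last (n + 1)).castSucc with hP
    have hLP : L ≠ P := by simp [hL, hP, Fin.ext_iff]
    have hdet : M.det = (M.updateRow L (M L + (-α) • M P)).det :=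
      (det_updateRow_add_smul_self M hLP (-α)).symm
    set a : ℝ := x L - α * x P with ha
    set b : ℝ := 1 - α ^ 2 with hb
    set s0 : Fin (n + 3) → ℝ := Pi.single (0 : Fin (n + 3)) (1 : ℝ) with hs0
    set sL : Fin (n + 3) → ℝ := Pi.single L (1 : ℝ) with hsL
    have hrow : (M L + (-α) • M P) = a • s0 + b • sL := by
      funext j
      refine Fin.lastCases ?_ (fun j' => ?_) j
      · have h0 : (Fin.last (n + 2) : Fin (n+3)) ≠ 0 := by simp [Fin.ext_iff]
        simp only [Pi.add_apply, Pi.smul_apply, hs0, hsL, Pi.single_apply, hM,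
          updateCol_apply, if_neg h0, smul_eq_mul]
        rw [hG, hG]
        have e1 : ((L : ℤ) - (Fin.last (n+2) : ℤ)).natAbs = 0 := by
          simp [hL]
        have e2 : ((P : ℤ) - (Fin.last (n+2) : ℤ)).natAbs = 1 := by
          simp [hP, Fin.coe_castSucc, Fin.val_last]
        rw [e1, e2]
        simp [hL, hb]
        ring
      · by_cases hj0 : j' = 0
        · subst hj0
          have : (Fin.castSucc (0 : Fin (n+2))) = (0 : Fin (n+3)) := rfl
          rw [this]
          have hL0 : L ≠ 0 := by simp [hL, Fin.ext_iff]
          simp only [Pi.add_apply, Pi.smul_apply, hs0, hsL, Pi.single_apply, hM,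
            updateCol_apply, if_pos rfl, smul_eq_mul, if_neg (Ne.symm hL0)]
          simp [ha, hL, hP]
          ring
        · -- middle columns: entry is 0
          have hj0' : (Fin.castSucc j') ≠ (0 : Fin (n+3)) := by
            exact fun h => hj0 (Fin.castSucc_injective _ h)
          have hjL : (Fin.castSucc j') ≠ L := by
            simp [hL, Fin.ext_iff]; omega
          simp only [Pi.add_apply, Pi.smul_apply, hs0, hsL, Pi.single_apply, hM,
            updateCol_apply, if_neg hj0', smul_eq_mul,
            if_neg (fun h => hjL h), if_neg (fun h => hj0' h)]
          rw [hG, hG]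
          have hj1 : 1 ≤ (j' : ℕ) := by
            rcases Nat.pos_of_ne_zero (fun h => hj0 (Fin.ext h)) with h; omega
          have hj2 : (j' : ℕ) ≤ n + 1 := by omega
          have e1 : ((L : ℤ) - ((Fin.castSucc j') : ℤ)).natAbs = (n + 1 - (j' : ℕ)) + 1 := by
            simp [hL, Fin.coe_castSucc, Fin.val_last]; omega
          have e2 : ((P : ℤ) - ((Fin.castSucc j') : ℤ)).natAbs = n + 1 - (j' : ℕ) := by
            simp [hP, Fin.coe_castSucc, Fin.val_last]; omega
          rw [e1, e2, pow_succ]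
          ring
    rw [hdet, hrow]
    rw [det_updateRow_add, det_updateRow_smul, det_updateRow_smul]
    have hD0 : (M.updateRow L s0).det = 0 := by
      set A := M.updateRow L s0 with hA
      rw [det_succ_row A L]
      rw [Fintype.sum_eq_single (0 : Fin (n + 3)) (fun j hj => by
        have hz : A L j = 0 := by
          simp [hA, Matrix.updateRow_self, hs0, Pi.single_apply, hj]
        simp [hz])]
      have hN : (A.submatrix L.succAbove Fin.succ).det = 0 := by
        set N := A.submatrix L.succAbove (Fin.succ : Fin (n+2) → Fin (n+3)) with hN'
        have hNe : ∀ i j, N i j = α ^ (((i : ℤ)) - ((j : ℤ) + 1)).natAbs := by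
          intro i j
          have hiL : (Fin.castSucc i) ≠ L := by simp [hL, Fin.ext_iff]; omega
          have hj0 : (Fin.succ j) ≠ (0 : Fin (n + 3)) := Fin.succ_ne_zero j
          simp only [hN', submatrix_apply, hL, Fin.succAbove_last, hA]
          rw [Matrix.updateRow_ne (by rw [← hL]; exact hiL), hM,
            Matrix.updateCol_ne hj0, hG]
          congr 1
        have h01 : (0 : Fin (n + 2)) ≠ 1 := by simp
        rw [← det_updateRow_add_smul_self N h01 (-α)]
        apply det_eq_zero_of_row_eq_zero 0
        intro j
        rw [Matrix.updateRow_self]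
        simp only [Pi.add_apply, Pi.smul_apply, smul_eq_mul]
        rw [hNe, hNe]
        have e1 : (((0 : Fin (n+2)) : ℤ) - ((j : ℤ) + 1)).natAbs = (j : ℕ) + 1 := by
          simp; omega
        have e2 : (((1 : Fin (n+2)) : ℤ) - ((j : ℤ) + 1)).natAbs = (j : ℕ) := by
          have : ((1 : Fin (n+2)) : ℤ) = 1 := by simp
          rw [this]; omega
        rw [e1, e2, pow_succ]
        ring
      have hfn : (Fin.succAbove (0 : Fin (n + 3))) = Fin.succ := funext (Fin.zero_succAbove)
      simp only [hfn, hN]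
      ring
    have hDL : (M.updateRow L sL).det = (1 - α ^ 2) ^ n * (x 0 - α * x 1) := by
      set B := M.updateRow L sL with hB
      rw [det_succ_row B L]
      rw [Fintype.sum_eq_single L (fun j hj => by
        have hz : B L j = 0 := by
          simp [hB, Matrix.updateRow_self, hsL, Pi.single_apply, hj]
        simp [hz])]
      have hBL : B L L = 1 := by
        simp [hB, hsL]
      have hsgn : ((-1 : ℝ)) ^ ((L : ℕ) + (L : ℕ)) = 1 :=
        Even.neg_one_pow ⟨(L : ℕ), rfl⟩
      rw [hBL, hsgn]
      set G' : Matrix (Fin (n + 2)) (Fin (n + 2)) ℝ :=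
        fun i j => G i.castSucc j.castSucc with hG'
      have hG'spec : ∀ i j, G' i j = α ^ ((i : ℤ) - (j : ℤ)).natAbs := by
        intro i j
        show G i.castSucc j.castSucc = _
        rw [hG]
        simp
      have hSeq : B.submatrix L.succAbove L.succAbove =
          G'.updateCol 0 (fun i => x i.castSucc) := by
        ext i j
        have hiL : (Fin.castSucc i) ≠ L := by simp [hL, Fin.ext_iff]; omega
        simp only [submatrix_apply, hL, Fin.succAbove_last, hB]
        rw [Matrix.updateRow_ne (by rw [← hL]; exact hiL), hM]
        by_cases hj : j = 0
        · subst hj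
          rw [Matrix.updateCol_apply, Matrix.updateCol_apply]
          simp
        · rw [Matrix.updateCol_ne (by exact fun h => hj (Fin.castSucc_injective _ h)),
            Matrix.updateCol_ne hj]
      rw [hSeq, ih G' hG'spec, Fin.castSucc_zero, Fin.castSucc_one, hb]
      ring
    rw [hD0, hDL, hb]
    ring

/-- Replacing the first column of `G'_{n,α}` (entries `α^{|i-j|}`, size `n ≥ 2`)
by a vector `x` gives determinant `(1-α²)^{n-2}·(x₁ - α·x₂)`; in particular it is
positive iff `x₁ > α·x₂`. -/
theorem det_update_first_column (n : ℕ) (α : ℝ) (h0 : 0 < α) (h1 : α < 1)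
    (G : Matrix (Fin (n + 2)) (Fin (n + 2)) ℝ)
    (hG : ∀ i j, G i j = α ^ ((i : ℤ) - (j : ℤ)).natAbs)
    (x : Fin (n + 2) → ℝ) :
    (G.updateCol 0 x).det = (1 - α ^ 2) ^ n * (x 0 - α * x 1) ∧
    (0 < (G.updateCol 0 x).det ↔ α * x 1 < x 0) := by
  have h := key α n G hG x
  refine ⟨h, ?_⟩
  rw [h]
  have hc : 0 < (1 - α ^ 2) ^ n := pow_pos (by nlinarith) n
  rw [mul_pos_iff_of_pos_left, sub_pos]
  exact hc
end

section
/- Replacing the last column: for the matrix G'_{n,α} with entries α^{|i-j|} and any vector x = (x_1,…,x_n)ᵀ, the determinant of the matrix obtained by replacing the last (n-th) column of G'_{n,α} by x equals (1-α²)^{n-2}·(x_n - α·x_{n-1}). -/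
open Matrix

lemma aux_det (α : ℝ) : ∀ (n : ℕ) (G : Matrix (Fin (n+2)) (Fin (n+2)) ℝ),
    (∀ i j, G i j = α ^ ((i : ℤ) - (j : ℤ)).natAbs) → ∀ x : Fin (n+2) → ℝ,
    (G.updateCol (Fin.last (n + 1)) x).det =
      (1 - α ^ 2) ^ n * (x (Fin.last (n + 1)) - α * x ⟨n, Nat.lt_add_of_pos_right (by norm_num)⟩) := by
  intro n
  induction n with
  | zero =>
    intro G hG x
    rw [Matrix.det_fin_two]
    simp [Matrix.updateCol_apply, hG, Fin.last]
    ring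
  | succ n ih =>
    intro G hG x
    set M := G.updateCol (Fin.last (n + 2)) x with hM
    have h01 : (0 : Fin (n+3)) ≠ 1 := by simp [Fin.ext_iff]
    have hdet : M.det = (M.updateRow 0 (M 0 + (-α) • M 1)).det :=
      (Matrix.det_updateRow_add_smul_self M h01 (-α)).symm
    set M' := M.updateRow 0 (M 0 + (-α) • M 1) with hM'
    have hMapp : ∀ (i j : Fin (n+3)), M i j = if j = Fin.last (n+2) then x i else G i j := by
      intro i j
      simp [hM, Matrix.updateCol_apply]
    have hrow : ∀ j : Fin (n+3), M' 0 j =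
        if j = Fin.last (n+2) then x 0 - α * x 1 else G 0 j - α * G 1 j := by
      intro j
      rw [hM', Matrix.updateRow_self]
      simp only [Pi.add_apply, Pi.smul_apply, smul_eq_mul, hMapp]
      split <;> ring
    have hzero : ∀ j : Fin (n+3), j ≠ 0 → j ≠ Fin.last (n+2) → M' 0 j = 0 := by
      intro j hj0 hjl
      rw [hrow, if_neg hjl, hG, hG]
      have hjv : 1 ≤ (j : ℕ) := Nat.pos_of_ne_zero (fun h => hj0 (Fin.ext h))
      have e1 : (((0 : Fin (n+3)) : ℤ) - (j : ℤ)).natAbs = (j : ℕ) := by simp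
      have e2 : (((1 : Fin (n+3)) : ℤ) - (j : ℤ)).natAbs = (j : ℕ) - 1 := by
        have h1 : ((1 : Fin (n+3)) : ℕ) = 1 := rfl
        omega
      rw [e1, e2]
      rw [show α * α ^ ((j:ℕ) - 1) = α ^ ((j:ℕ) - 1 + 1) by rw [pow_succ]; ring,
        show (j:ℕ) - 1 + 1 = (j:ℕ) by omega, sub_self]
    rw [hdet, Matrix.det_succ_row_zero]
    have hne : (0 : Fin (n+3)) ≠ Fin.last (n+2) := by simp [Fin.ext_iff]
    have hsum := Finset.sum_subset (f := fun j : Fin (n+3) =>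
        (-1 : ℝ) ^ (j : ℕ) * M' 0 j * (M'.submatrix Fin.succ j.succAbove).det)
      (Finset.subset_univ ({0, Fin.last (n+2)} : Finset (Fin (n+3))))
      (by
        intro j _ hj
        simp only [Finset.mem_insert, Finset.mem_singleton, not_or] at hj
        simp [hzero j hj.1 hj.2])
    rw [← hsum, Finset.sum_pair hne]
    -- second term vanishes
    have hB : (M'.submatrix Fin.succ (Fin.succAbove (Fin.last (n+2)))).det = 0 := by
      set B := M'.submatrix Fin.succ (Fin.succAbove (Fin.last (n+2))) with hBdef
      have hBapp : ∀ (i j : Fin (n+2)), B i j = α ^ (((i:ℤ) + 1) - (j:ℤ)).natAbs := by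
        intro i j
        have h1 : B i j = M' i.succ j.castSucc := by
          rw [hBdef]
          simp [Fin.succAbove_last]
        rw [h1, hM', Matrix.updateRow_ne (Fin.succ_ne_zero i), hMapp,
          if_neg (Fin.castSucc_lt_last j).ne, hG]
        congr 1
        all_goals
          simp only [Fin.val_succ, Fin.coe_castSucc]
          omega
      have hcol : ∀ k, B k 0 = α * B k 1 := by
        intro k
        rw [hBapp, hBapp]
        have e0 : (((k:ℤ) + 1) - ((0 : Fin (n+2)):ℤ)).natAbs = (k:ℕ) + 1 := by
          have h1 : ((0 : Fin (n+2)) : ℕ) = 0 := rfl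
          omega
        have e1 : (((k:ℤ) + 1) - ((1 : Fin (n+2)):ℤ)).natAbs = (k:ℕ) := by
          have h1 : ((1 : Fin (n+2)) : ℕ) = 1 := rfl
          omega
        rw [e0, e1, pow_succ]
        ring
      have h10 : (1 : Fin (n+2)) ≠ 0 := by simp [Fin.ext_iff]
      have hBeq : B = B.updateCol 0 (α • fun k => B k 1) := by
        ext i j
        rcases eq_or_ne j 0 with rfl | hj
        · rw [Matrix.updateCol_self]
          simpa using hcol i
        · rw [Matrix.updateCol_ne hj]
      rw [hBeq, Matrix.det_updateCol_smul, Matrix.det_updateCol_eq_zero h10, mul_zero]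
    rw [hB, mul_zero]
    -- first term via ih
    set G₁ : Matrix (Fin (n+2)) (Fin (n+2)) ℝ := Matrix.of (fun i j => G i.succ j.succ) with hG₁def
    have hsub : M'.submatrix Fin.succ (Fin.succAbove 0) =
        G₁.updateCol (Fin.last (n+1)) (fun i => x i.succ) := by
      ext i j
      have h1 : (M'.submatrix Fin.succ (Fin.succAbove 0)) i j = M' i.succ j.succ := by
        simp [Fin.zero_succAbove]
      rw [h1, hM', Matrix.updateRow_ne (Fin.succ_ne_zero i), hMapp, Matrix.updateCol_apply]
      have hiff : j.succ = Fin.last (n+2) ↔ j = Fin.last (n+1) := by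
        rw [← Fin.succ_last, Fin.succ_inj]
      rcases eq_or_ne j (Fin.last (n+1)) with rfl | hj
      · rw [if_pos (hiff.2 rfl), if_pos rfl]
      · rw [if_neg (fun h => hj (hiff.1 h)), if_neg hj]
        rfl
    have hG1 : ∀ i j : Fin (n+2), G₁ i j = α ^ ((i : ℤ) - (j : ℤ)).natAbs := by
      intro i j
      rw [hG₁def]
      simp only [Matrix.of_apply]
      rw [hG]
      congr 1
      have hv : (i.succ : ℕ) = (i : ℕ) + 1 := rfl
      have hv2 : (j.succ : ℕ) = (j : ℕ) + 1 := rfl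
      omega
    rw [hsub, ih _ hG1]
    have hM00 : M' 0 0 = 1 - α ^ 2 := by
      rw [hrow, if_neg hne, hG, hG]
      norm_num
      ring
    rw [hM00]
    have hx1 : (Fin.last (n+1)).succ = Fin.last (n+2) := Fin.succ_last (n+1)
    have hx2 : (⟨n, by omega⟩ : Fin (n+2)).succ = (⟨n+1, by omega⟩ : Fin (n+3)) := rfl
    rw [hx1, hx2]
    simp only [Fin.val_zero, pow_zero]
    ring

/-- Replacing the last column of `G'_{n,α}` (entries `α^{|i-j|}`, size `n ≥ 2`)
by a vector `x` gives determinant `(1-α²)^{n-2}·(x_n - α·x_{n-1})`. -/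
theorem det_update_last_column (n : ℕ) (α : ℝ) (h0 : 0 < α) (h1 : α < 1)
    (G : Matrix (Fin (n + 2)) (Fin (n + 2)) ℝ)
    (hG : ∀ i j, G i j = α ^ ((i : ℤ) - (j : ℤ)).natAbs)
    (x : Fin (n + 2) → ℝ) :
    (G.updateCol (Fin.last (n + 1)) x).det =
      (1 - α ^ 2) ^ n * (x (Fin.last (n + 1)) - α * x ⟨n, by omega⟩) := by
  exact aux_det α n G hG x
end

section
/- Replacing an interior column: for 2 ≤ i ≤ n-1 and any vector x = (x_1,…,x_n)ᵀ, the determinant of the matrix obtained from G'_{n,α} (entries α^{|r-c|}) by replacing its i-th column by x equals (1-α²)^{n-2}·((1+α²)·x_i - α·(x_{i-1} + x_{i+1})). -/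
open Matrix Finset

private lemma prod_if_eq (n : ℕ) (k0 : Fin n) (a b : ℝ) :
    (∏ k : Fin n, if k = k0 then a else b) = a * b ^ (n - 1) := by
  rw [← Finset.mul_prod_erase Finset.univ _ (Finset.mem_univ k0), if_pos rfl,
    Finset.prod_congr rfl (fun k hk => if_neg (Finset.ne_of_mem_erase hk)),
    Finset.prod_const, Finset.card_erase_of_mem (Finset.mem_univ k0),
    Finset.card_univ, Fintype.card_fin]

private lemma tri_aux (α : ℝ) {p q r : ℕ} (h1 : q + 1 = p) (h2 : r = p + 1) :
    (1 + α ^ 2) * α ^ p - α * (α ^ q + α ^ r) = 0 := by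
  subst h2; subst h1; ring

private lemma det_pow_gap (α : ℝ) : ∀ (m : ℕ) (f : Fin (m + 1) → ℤ), StrictMono f →
    (Matrix.of fun r c : Fin (m + 1) => α ^ (f r - f c).natAbs).det =
      ∏ k : Fin m, (1 - (α ^ (f k.succ - f k.castSucc).natAbs) ^ 2) := by
  intro m
  induction m with
  | zero =>
    intro f _
    simp [Matrix.det_fin_one]
  | succ m ih =>
    intro f hf
    set A : Matrix (Fin (m + 2)) (Fin (m + 2)) ℝ :=
      Matrix.of fun r c : Fin (m + 2) => α ^ (f r - f c).natAbs with hA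
    have h01 : (0 : Fin (m + 2)) ≠ 1 := by
      simp [Fin.ext_iff]
    set d : ℕ := (f 1 - f 0).natAbs with hd
    have key := Matrix.det_updateRow_add_smul_self A h01 (-(α ^ d))
    set B := A.updateRow 0 (A 0 + (-(α ^ d)) • A 1) with hB
    have hB0 : ∀ k : Fin (m + 2), B 0 k =
        if k = 0 then 1 - (α ^ d) ^ 2 else 0 := by
      intro k
      have hBk : B 0 k = α ^ (f 0 - f k).natAbs - α ^ d * α ^ (f 1 - f k).natAbs := by
        simp [hB, hA, Matrix.updateRow_self]
        ring
      by_cases hk : k = 0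
      · subst hk
        have h0 : (f 0 - f 0).natAbs = 0 := by omega
        have h1 : (f 1 - f 0).natAbs = d := rfl
        rw [hBk, if_pos rfl, h0, h1]
        ring
      · have hk1 : (1 : Fin (m + 2)) ≤ k := by
          rw [Fin.le_def]
          have := Fin.pos_iff_ne_zero.mpr hk
          have hk' : (k : ℕ) ≠ 0 := fun h => hk (Fin.ext h)
          simp only [Fin.val_one]; omega
        have hlt : f 0 < f 1 := hf (by rw [Fin.lt_def]; simp)
        have hle : f 1 ≤ f k := hf.monotone hk1
        have habs : (f 0 - f k).natAbs = d + (f 1 - f k).natAbs := by omega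
        rw [hBk, if_neg hk, habs, pow_add]
        ring
    have hdetB : B.det = (1 - (α ^ d) ^ 2) * ((B.submatrix Fin.succ Fin.succ).det) := by
      rw [Matrix.det_succ_row_zero]
      rw [Finset.sum_eq_single 0]
      · simp [hB0]
      · intro j _ hj
        rw [hB0, if_neg hj]
        ring
      · simp
    have hsub : B.submatrix Fin.succ Fin.succ =
        Matrix.of fun r c : Fin (m + 1) => α ^ ((f ∘ Fin.succ) r - (f ∘ Fin.succ) c).natAbs := by
      ext r c
      simp [hB, hA, Matrix.updateRow_ne (Fin.succ_ne_zero r)]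
    have hmono : StrictMono (f ∘ Fin.succ) := hf.comp Fin.strictMono_succ
    rw [← key, hdetB, hsub, ih _ hmono]
    rw [Fin.prod_univ_succ]
    congr 1

/-- Replacing an interior column `i` (with `1 ≤ i ≤ n` in zero-based indexing of
an `(n+2)×(n+2)` matrix) of `G'_{n,α}` (entries `α^{|r-c|}`) by a vector `x`
gives determinant `(1-α²)^{n}·((1+α²)·x_i - α·(x_{i-1} + x_{i+1}))`. -/
theorem det_update_interior_column (n : ℕ) (α : ℝ) (h0 : 0 < α) (h1 : α < 1)
    (G : Matrix (Fin (n + 2)) (Fin (n + 2)) ℝ)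
    (hG : ∀ i j, G i j = α ^ ((i : ℤ) - (j : ℤ)).natAbs)
    (x : Fin (n + 2) → ℝ) (i : Fin (n + 2)) (hi1 : 1 ≤ (i : ℕ)) (hi2 : (i : ℕ) ≤ n) :
    (G.updateCol i x).det =
      (1 - α ^ 2) ^ n *
        ((1 + α ^ 2) * x i - α * (x ⟨(i : ℕ) - 1, by omega⟩ + x ⟨(i : ℕ) + 1, by omega⟩)) := by
  have hα2 : (0 : ℝ) < 1 + α ^ 2 := by positivity
  set im : Fin (n + 2) := ⟨(i : ℕ) - 1, by omega⟩ with him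
  set ip : Fin (n + 2) := ⟨(i : ℕ) + 1, by omega⟩ with hip
  have himi : im ≠ i := Fin.ne_of_val_ne (by simp [him]; omega)
  have hipi : ip ≠ i := Fin.ne_of_val_ne (by simp [hip])
  set v : Fin (n + 2) → ℝ := fun j =>
    (1 + α ^ 2) * (Pi.single i 1 : Fin (n + 2) → ℝ) j
      - α * (Pi.single im 1 : Fin (n + 2) → ℝ) j
      - α * (Pi.single ip 1 : Fin (n + 2) → ℝ) j with hv
  -- sum of v against any vector
  have hsum : ∀ y : Fin (n + 2) → ℝ,
      ∑ j, v j * y j = (1 + α ^ 2) * y i - α * (y im + y ip) := by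
    intro y
    have h1 : ∀ a : Fin (n + 2), ∑ j, (Pi.single a 1 : Fin (n + 2) → ℝ) j * y j = y a := by
      intro a
      simp [Pi.single_apply, ite_mul]
    simp only [hv, sub_mul, mul_assoc, Finset.sum_sub_distrib, ← Finset.mul_sum, h1]
    ring
  -- v against columns of G
  have hmv : (im : ℕ) = (i : ℕ) - 1 := rfl
  have hpv : (ip : ℕ) = (i : ℕ) + 1 := rfl
  have hvG : ∀ k, ∑ j, v j * G j k = if k = i then 1 - α ^ 2 else 0 := by
    intro k
    rw [hsum (fun j => G j k)]
    simp only [hG]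
    by_cases hk : k = i
    · subst hk
      rw [if_pos rfl]
      have e0 : (((k : ℕ) : ℤ) - ((k : ℕ) : ℤ)).natAbs = 0 := by omega
      have e1 : (((im : ℕ) : ℤ) - ((k : ℕ) : ℤ)).natAbs = 1 := by omega
      have e2 : (((ip : ℕ) : ℤ) - ((k : ℕ) : ℤ)).natAbs = 1 := by omega
      rw [e0, e1, e2]
      ring
    · rw [if_neg hk]
      have hkne : (k : ℕ) ≠ (i : ℕ) := fun h => hk (Fin.ext h)
      rcases lt_or_gt_of_ne hkne with h | h
      · have e1 : (((im : ℕ) : ℤ) - ((k : ℕ) : ℤ)).natAbs + 1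
            = (((i : ℕ) : ℤ) - ((k : ℕ) : ℤ)).natAbs := by omega
        have e2 : (((ip : ℕ) : ℤ) - ((k : ℕ) : ℤ)).natAbs
            = (((i : ℕ) : ℤ) - ((k : ℕ) : ℤ)).natAbs + 1 := by omega
        exact tri_aux α e1 e2
      · have e1 : (((ip : ℕ) : ℤ) - ((k : ℕ) : ℤ)).natAbs + 1
            = (((i : ℕ) : ℤ) - ((k : ℕ) : ℤ)).natAbs := by omega
        have e2 : (((im : ℕ) : ℤ) - ((k : ℕ) : ℤ)).natAbs
            = (((i : ℕ) : ℤ) - ((k : ℕ) : ℤ)).natAbs + 1 := by omega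
        have := tri_aux α e1 e2
        linarith
  set s : ℝ := (1 + α ^ 2) * x i - α * (x im + x ip) with hs
  set N := G.updateCol i x with hN
  set P := (1 : Matrix (Fin (n + 2)) (Fin (n + 2)) ℝ).updateRow i v with hP
  have hPN : P * N = N.updateRow i (Pi.single i s) := by
    ext j k
    rw [Matrix.mul_apply]
    by_cases hj : j = i
    · rw [hj, Matrix.updateRow_self]
      have hPv : ∀ l, P i l = v l := fun l => by rw [hP, Matrix.updateRow_self]
      simp only [hPv]
      by_cases hk : k = i
      · rw [hk]
        have hNx : ∀ l, N l i = x l := fun l => by rw [hN, Matrix.updateCol_self]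
        simp only [hNx]
        rw [hsum x, Pi.single_eq_same, hs]
      · have hNG : ∀ l, N l k = G l k := fun l => by rw [hN, Matrix.updateCol_ne hk]
        simp only [hNG]
        rw [hvG k, if_neg hk, Pi.single_eq_of_ne hk]
    · rw [Matrix.updateRow_ne hj]
      have hP1 : ∀ l, P j l = (1 : Matrix (Fin (n + 2)) (Fin (n + 2)) ℝ) j l :=
        fun l => by rw [hP, Matrix.updateRow_ne hj]
      simp only [hP1, Matrix.one_apply, ite_mul, one_mul, zero_mul, Finset.sum_ite_eq,
        Finset.mem_univ, if_true]
  have hdetP : P.det = 1 + α ^ 2 := by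
    have hv' : v = (1 + α ^ 2) • (Pi.single i 1 : Fin (n + 2) → ℝ)
        + ((-α) • (Pi.single im 1 : Fin (n + 2) → ℝ)
          + (-α) • (Pi.single ip 1 : Fin (n + 2) → ℝ)) := by
      funext j
      simp only [hv, Pi.add_apply, Pi.smul_apply, smul_eq_mul]
      ring
    have e1 : ((1 : Matrix (Fin (n + 2)) (Fin (n + 2)) ℝ).updateRow i
        (Pi.single i 1)).det = 1 := by
      have : (1 : Matrix (Fin (n + 2)) (Fin (n + 2)) ℝ).updateRow i (Pi.single i 1) = 1 := by
        ext a b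
        rw [Matrix.updateRow_apply]
        split_ifs with h
        · subst h; simp [Matrix.one_apply, Pi.single_apply, eq_comm]
        · rfl
      rw [this, Matrix.det_one]
    have e2 : ((1 : Matrix (Fin (n + 2)) (Fin (n + 2)) ℝ).updateRow i
        (Pi.single im 1)).det = 0 := by
      apply Matrix.det_zero_of_row_eq himi.symm
      funext b
      rw [Matrix.updateRow_self, Matrix.updateRow_ne himi]
      simp [Matrix.one_apply, Pi.single_apply, eq_comm]
    have e3 : ((1 : Matrix (Fin (n + 2)) (Fin (n + 2)) ℝ).updateRow i
        (Pi.single ip 1)).det = 0 := by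
      apply Matrix.det_zero_of_row_eq hipi.symm
      funext b
      rw [Matrix.updateRow_self, Matrix.updateRow_ne hipi]
      simp [Matrix.one_apply, Pi.single_apply, eq_comm]
    rw [hP, hv', Matrix.det_updateRow_add, Matrix.det_updateRow_add,
      Matrix.det_updateRow_smul, Matrix.det_updateRow_smul, Matrix.det_updateRow_smul,
      e1, e2, e3]
    ring
  have hdet2 : (N.updateRow i (Pi.single i s)).det = s * ((1 - α ^ 2) ^ n * (1 + α ^ 2)) := by
    rw [Matrix.det_succ_row _ i, Finset.sum_eq_single i]
    · have h1 : (N.updateRow i (Pi.single i s)) i i = s := by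
        rw [Matrix.updateRow_self, Pi.single_eq_same]
      have hsign : ((-1 : ℝ)) ^ ((i : ℕ) + (i : ℕ)) = 1 := by
        rw [← two_mul, pow_mul]; norm_num
      rw [h1, hsign, one_mul]
      set f : Fin (n + 1) → ℤ := fun r => (((i.succAbove r : Fin (n + 2)) : ℕ) : ℤ) with hf
      have hminor : (N.updateRow i (Pi.single i s)).submatrix i.succAbove i.succAbove =
          Matrix.of fun r c : Fin (n + 1) => α ^ (f r - f c).natAbs := by
        ext r c
        rw [Matrix.submatrix_apply, Matrix.updateRow_ne (Fin.succAbove_ne i r), hN,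
          Matrix.updateCol_ne (Fin.succAbove_ne i c), hG]
        rfl
      have hmono : StrictMono f := by
        intro a b hab
        have := Fin.strictMono_succAbove i hab
        rw [Fin.lt_def] at this
        simp only [hf]
        exact_mod_cast this
      rw [hminor, det_pow_gap α n f hmono]
      have hval : ∀ r : Fin (n + 1), ((i.succAbove r : Fin (n + 2)) : ℕ) =
          if (r : ℕ) < (i : ℕ) then (r : ℕ) else (r : ℕ) + 1 := by
        intro r
        by_cases h : r.castSucc < i
        · rw [Fin.succAbove_of_castSucc_lt _ _ h, if_pos (by rw [Fin.lt_def] at h; simpa using h)]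
          simp
        · rw [Fin.succAbove_of_le_castSucc _ _ (le_of_not_gt h), if_neg (by rw [Fin.lt_def] at h; simpa using h)]
          simp
      have hgap : ∀ k : Fin n, (f k.succ - f k.castSucc).natAbs =
          if (k : ℕ) + 1 = (i : ℕ) then 2 else 1 := by
        intro k
        have e1 := hval k.succ
        have e2 := hval k.castSucc
        rw [Fin.val_succ] at e1
        rw [Fin.coe_castSucc] at e2
        have f1 : f k.succ = (((i.succAbove k.succ : Fin (n + 2)) : ℕ) : ℤ) := by
          simp only [hf]
        have f2 : f k.castSucc = (((i.succAbove k.castSucc : Fin (n + 2)) : ℕ) : ℤ) := by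
          simp only [hf]
        rw [f1, f2]
        by_cases h : (k : ℕ) + 1 = (i : ℕ)
        · rw [if_pos h]
          rw [if_neg (by omega)] at e1
          rw [if_pos (by omega)] at e2
          omega
        · rw [if_neg h]
          by_cases h2 : (k : ℕ) + 1 < (i : ℕ)
          · rw [if_pos h2] at e1
            rw [if_pos (by omega)] at e2
            omega
          · rw [if_neg h2] at e1
            rw [if_neg (by omega)] at e2
            omega
      have hprod : ∀ k : Fin n, (1 - (α ^ (f k.succ - f k.castSucc).natAbs) ^ 2) =
          if k = (⟨(i : ℕ) - 1, by omega⟩ : Fin n) then 1 - (α ^ 2) ^ 2 else 1 - (α ^ 1) ^ 2 := by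
        intro k
        conv_lhs => rw [hgap k]
        by_cases h : (k : ℕ) + 1 = (i : ℕ)
        · have hk0 : k = (⟨(i : ℕ) - 1, by omega⟩ : Fin n) := by
            apply Fin.ext
            simp
            omega
          conv_lhs => rw [if_pos h]
          conv_rhs => rw [if_pos hk0]
        · have hk0 : ¬ k = (⟨(i : ℕ) - 1, by omega⟩ : Fin n) := by
            intro hh
            apply h
            have := congrArg Fin.val hh
            simp at this
            omega
          conv_lhs => rw [if_neg h]
          conv_rhs => rw [if_neg hk0]
      rw [Finset.prod_congr rfl (fun k _ => hprod k)]
      rw [prod_if_eq n ⟨(i : ℕ) - 1, by omega⟩ (1 - (α ^ 2) ^ 2) (1 - (α ^ 1) ^ 2)]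
      obtain ⟨m, hm⟩ : ∃ m, n = m + 1 := ⟨n - 1, by omega⟩
      subst hm
      simp only [Nat.add_sub_cancel]
      ring
    · intro j _ hj
      rw [Matrix.updateRow_self, Pi.single_eq_of_ne hj]
      ring
    · intro h
      exact absurd (Finset.mem_univ i) h
  have hmul := Matrix.det_mul P N
  rw [hPN, hdet2, hdetP] at hmul
  have : (1 + α ^ 2) * N.det = (1 + α ^ 2) * ((1 - α ^ 2) ^ n * s) := by
    rw [← hmul]; ring
  have hNdet := mul_left_cancel₀ (ne_of_gt hα2) this
  rw [hNdet, hs]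
end

section
/- For every column m of the matrix G'_{n,β} (entries β^{|i-j|}) with 0 < α < β < 1, and every three consecutive entries x₁, x₂, x₃ of that column, the inequality (1+α²)·x₂ - α·(x₁ + x₃) > 0 holds. -/
/-- Every three consecutive entries `x₁ = β^{|i-1-j|}, x₂ = β^{|i-j|},
x₃ = β^{|i+1-j|}` of a column `j` of `G'_{n,β}` (with `2 ≤ i ≤ n-1`,
`1 ≤ j ≤ n`, `0 < α < β < 1`) satisfy `(1+α²)·x₂ - α·(x₁ + x₃) > 0`. -/
theorem geometric_column_three_term (n : ℕ) (hn : 3 ≤ n)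
    (α β : ℝ) (h0 : 0 < α) (hab : α < β) (h1 : β < 1)
    (i j : ℤ) (hi1 : 2 ≤ i) (hi2 : i ≤ (n : ℤ) - 1) (hj1 : 1 ≤ j) (hj2 : j ≤ (n : ℤ)) :
    0 < (1 + α ^ 2) * β ^ (i - j).natAbs -
        α * (β ^ (i - 1 - j).natAbs + β ^ (i + 1 - j).natAbs) := by
  have h0b : 0 < β := h0.trans hab
  have hαβ : 0 < 1 - α * β := by nlinarith
  have hba : 0 < β - α := sub_pos.2 hab
  rcases lt_trichotomy (i - j) 0 with h | h | h
  · obtain ⟨m, hm⟩ : ∃ m : ℕ, i - j = -((m : ℤ) + 1) := ⟨(-(i - j)).toNat - 1, by omega⟩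
    have e1 : (i - j).natAbs = m + 1 := by omega
    have e2 : (i - 1 - j).natAbs = m + 2 := by omega
    have e3 : (i + 1 - j).natAbs = m := by omega
    rw [e1, e2, e3]
    have key : 0 < β ^ m * ((β - α) * (1 - α * β)) :=
      mul_pos (pow_pos h0b m) (mul_pos hba hαβ)
    have eq : (1 + α ^ 2) * β ^ (m + 1) - α * (β ^ (m + 2) + β ^ m)
        = β ^ m * ((β - α) * (1 - α * β)) := by ring
    linarith [eq ▸ key]
  · have e1 : (i - j).natAbs = 0 := by omega
    have e2 : (i - 1 - j).natAbs = 1 := by omega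
    have e3 : (i + 1 - j).natAbs = 1 := by omega
    rw [e1, e2, e3]
    nlinarith [sq_nonneg (1 - α)]
  · obtain ⟨m, hm⟩ : ∃ m : ℕ, i - j = (m : ℤ) + 1 := ⟨(i - j).toNat - 1, by omega⟩
    have e1 : (i - j).natAbs = m + 1 := by omega
    have e2 : (i - 1 - j).natAbs = m := by omega
    have e3 : (i + 1 - j).natAbs = m + 2 := by omega
    rw [e1, e2, e3]
    have key : 0 < β ^ m * ((β - α) * (1 - α * β)) :=
      mul_pos (pow_pos h0b m) (mul_pos hba hαβ)
    have eq : (1 + α ^ 2) * β ^ (m + 1) - α * (β ^ m + β ^ (m + 2))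
        = β ^ m * ((β - α) * (1 - α * β)) := by ring
    linarith [eq ▸ key]
end

section
/- Derivability of more-private geometric mechanisms: for privacy parameters 0 < α ≤ β < 1, there exists a row-stochastic matrix T (nonnegative entries, rows summing to 1) such that G_{n,β} = G_{n,α}·T, where G_{n,γ} denotes the range-restricted geometric mechanism matrix with parameter γ. -/
noncomputable def Aent (n : ℕ) (a : ℝ) (i k : ℕ) : ℝ :=
  (if i = 0 ∨ i = n then (1 - a)⁻¹ else ((1 - a) ^ 2)⁻¹) *
  (if k = i then (if i = 0 ∨ i = n then 1 else 1 + a ^ 2)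
   else if (i : ℤ) - k = 1 ∨ (k : ℤ) - i = 1 then -a else 0)

noncomputable def Sval (n : ℕ) (a γ : ℝ) (i j : ℕ) : ℝ :=
  if i = j then (if i = 0 ∨ i = n then (1 - a * γ) / (1 - a)
                 else (1 + a ^ 2 - 2 * a * γ) / (1 - a) ^ 2)
  else (γ - a) * γ ^ (((i : ℤ) - j).natAbs - 1) *
    (if i = 0 ∨ i = n then (1 - a)⁻¹ else (1 - a * γ) / (1 - a) ^ 2)

lemma Aent_far (n : ℕ) (a : ℝ) (i k : ℕ) (h : 1 < ((i : ℤ) - k).natAbs) :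
    Aent n a i k = 0 := by
  rw [Aent, if_neg (show ¬ k = i by omega),
      if_neg (show ¬((i : ℤ) - k = 1 ∨ (k : ℤ) - i = 1) by omega), mul_zero]

lemma Aent_same (n : ℕ) (a : ℝ) (i : ℕ) :
    Aent n a i i = (if i = 0 ∨ i = n then (1 - a)⁻¹ else ((1 - a) ^ 2)⁻¹) *
      (if i = 0 ∨ i = n then 1 else 1 + a ^ 2) := by
  rw [Aent, if_pos rfl]

lemma Aent_adj (n : ℕ) (a : ℝ) (i k : ℕ) (h : ((i : ℤ) - k).natAbs = 1) :
    Aent n a i k = (if i = 0 ∨ i = n then (1 - a)⁻¹ else ((1 - a) ^ 2)⁻¹) * (-a) := by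
  rw [Aent, if_neg (show ¬ k = i by omega),
      if_pos (show ((i : ℤ) - k = 1 ∨ (k : ℤ) - i = 1) by omega)]

lemma Sval_diag_bd (n : ℕ) (a γ : ℝ) (i j : ℕ) (h : i = j) (hb : i = 0 ∨ i = n) :
    Sval n a γ i j = (1 - a * γ) / (1 - a) := by
  rw [Sval, if_pos h, if_pos hb]

lemma Sval_diag_int (n : ℕ) (a γ : ℝ) (i j : ℕ) (h : i = j) (hb : ¬(i = 0 ∨ i = n)) :
    Sval n a γ i j = (1 + a ^ 2 - 2 * a * γ) / (1 - a) ^ 2 := by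
  rw [Sval, if_pos h, if_neg hb]

lemma Sval_off_bd (n : ℕ) (a γ : ℝ) (i j m : ℕ) (h : i ≠ j)
    (hm : ((i : ℤ) - j).natAbs = m + 1) (hb : i = 0 ∨ i = n) :
    Sval n a γ i j = (γ - a) * γ ^ m * (1 - a)⁻¹ := by
  rw [Sval, if_neg h, if_pos hb, hm, Nat.add_sub_cancel]

lemma Sval_off_int (n : ℕ) (a γ : ℝ) (i j m : ℕ) (h : i ≠ j)
    (hm : ((i : ℤ) - j).natAbs = m + 1) (hb : ¬(i = 0 ∨ i = n)) :
    Sval n a γ i j = (γ - a) * γ ^ m * ((1 - a * γ) / (1 - a) ^ 2) := by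
  rw [Sval, if_neg h, if_neg hb, hm, Nat.add_sub_cancel]

lemma key_s14 (n : ℕ) (hn : 1 ≤ n) (a γ : ℝ) (i j : ℕ) (hi : i ≤ n) (hj : j ≤ n) :
    ∑ k ∈ Finset.range (n + 1), Aent n a i k * γ ^ (((k : ℤ) - j).natAbs)
      = Sval n a γ i j := by
  rcases eq_or_ne i 0 with rfl | hi0
  · have hb : ((0:ℕ) = 0 ∨ 0 = n) := Or.inl rfl
    have hz : ∀ k ∈ Finset.range (n + 1), k ∉ Finset.range 2 →
        Aent n a 0 k * γ ^ (((k : ℤ) - j).natAbs) = 0 := by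
      intro k _ hk
      simp only [Finset.mem_range] at hk
      rw [Aent_far n a 0 k (by omega), zero_mul]
    rw [← Finset.sum_subset (Finset.range_subset_range.mpr (by omega)) hz]
    rw [Finset.sum_range_succ, Finset.sum_range_one]
    rw [Aent_same, Aent_adj n a 0 1 (by omega)]
    simp only [eq_self_iff_true, true_or, if_true]
    rcases eq_or_ne j 0 with rfl | hj0
    · rw [Sval_diag_bd n a γ 0 0 rfl hb]
      have e0 : (((0:ℕ) : ℤ) - ((0:ℕ):ℤ)).natAbs = 0 := by omega
      have e1 : (((1:ℕ) : ℤ) - ((0:ℕ):ℤ)).natAbs = 1 := by omega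
      rw [e0, e1, pow_zero, pow_one]
      ring
    · obtain ⟨m, rfl⟩ : ∃ m, j = m + 1 := ⟨j - 1, by omega⟩
      rw [Sval_off_bd n a γ 0 (m+1) m (by omega) (by omega) hb]
      have e0 : (((0:ℕ) : ℤ) - ((m+1:ℕ):ℤ)).natAbs = m + 1 := by omega
      have e1 : (((1:ℕ) : ℤ) - ((m+1:ℕ):ℤ)).natAbs = m := by omega
      rw [e0, e1, pow_succ]
      ring
  · rcases eq_or_ne i n with hin | hin
    · have hb : (i = 0 ∨ i = n) := Or.inr hin
      have hz : ∀ k ∈ Finset.range (n + 1), k ∉ Finset.Icc (i-1) i →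
          Aent n a i k * γ ^ (((k : ℤ) - j).natAbs) = 0 := by
        intro k hk hk'
        simp only [Finset.mem_range] at hk
        simp only [Finset.mem_Icc] at hk'
        rw [Aent_far n a i k (by omega), zero_mul]
      have hsub : Finset.Icc (i-1) i ⊆ Finset.range (n+1) := by
        intro x hx
        simp only [Finset.mem_Icc] at hx
        simp only [Finset.mem_range]
        omega
      rw [← Finset.sum_subset hsub hz]
      have hIcc : Finset.Icc (i-1) i = {i-1, i} := by
        ext x
        simp only [Finset.mem_Icc, Finset.mem_insert, Finset.mem_singleton]
        omega
      rw [hIcc, Finset.sum_pair (by omega : i - 1 ≠ i)]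
      rw [Aent_same, Aent_adj n a i (i-1) (by omega)]
      simp only [if_pos hb]
      rcases eq_or_ne j i with rfl | hji
      · rw [Sval_diag_bd n a γ j j rfl hb]
        have e0 : (((j:ℕ) : ℤ) - ((j:ℕ):ℤ)).natAbs = 0 := by omega
        have e1 : ((((j-1):ℕ) : ℤ) - ((j:ℕ):ℤ)).natAbs = 1 := by omega
        rw [e0, e1, pow_zero, pow_one]
        ring
      · have hji' : j < i := by omega
        obtain ⟨m, hm⟩ : ∃ m, j + m + 1 = i := ⟨i - j - 1, by omega⟩
        rw [Sval_off_bd n a γ i j m (by omega) (by omega) hb]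
        have e0 : (((i:ℕ) : ℤ) - ((j:ℕ):ℤ)).natAbs = m + 1 := by omega
        have e1 : ((((i-1):ℕ) : ℤ) - ((j:ℕ):ℤ)).natAbs = m := by omega
        rw [e0, e1, pow_succ]
        ring
    · have hb : ¬(i = 0 ∨ i = n) := by omega
      have hz : ∀ k ∈ Finset.range (n + 1), k ∉ Finset.Icc (i-1) (i+1) →
          Aent n a i k * γ ^ (((k : ℤ) - j).natAbs) = 0 := by
        intro k hk hk'
        simp only [Finset.mem_range] at hk
        simp only [Finset.mem_Icc] at hk'
        rw [Aent_far n a i k (by omega), zero_mul]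
      have hsub : Finset.Icc (i-1) (i+1) ⊆ Finset.range (n+1) := by
        intro x hx
        simp only [Finset.mem_Icc] at hx
        simp only [Finset.mem_range]
        omega
      rw [← Finset.sum_subset hsub hz]
      have hIcc : Finset.Icc (i-1) (i+1) = {i-1, i, i+1} := by
        ext x
        simp only [Finset.mem_Icc, Finset.mem_insert, Finset.mem_singleton]
        omega
      rw [hIcc]
      rw [Finset.sum_insert (by
            simp only [Finset.mem_insert, Finset.mem_singleton]
            omega),
          Finset.sum_pair (by omega : i ≠ i + 1)]
      rw [Aent_same, Aent_adj n a i (i-1) (by omega), Aent_adj n a i (i+1) (by omega)]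
      simp only [if_neg hb]
      rcases lt_trichotomy i j with hij | rfl | hij
      · obtain ⟨m, hm⟩ : ∃ m, i + m + 1 = j := ⟨j - i - 1, by omega⟩
        rw [Sval_off_int n a γ i j m (by omega) (by omega) hb]
        have e1 : ((((i-1):ℕ) : ℤ) - ((j:ℕ):ℤ)).natAbs = m + 2 := by omega
        have e0 : (((i:ℕ) : ℤ) - ((j:ℕ):ℤ)).natAbs = m + 1 := by omega
        have e2 : ((((i+1):ℕ) : ℤ) - ((j:ℕ):ℤ)).natAbs = m := by omega
        rw [e1, e0, e2, pow_succ, pow_succ]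
        ring
      · rw [Sval_diag_int n a γ i i rfl hb]
        have e1 : ((((i-1):ℕ) : ℤ) - ((i:ℕ):ℤ)).natAbs = 1 := by omega
        have e0 : (((i:ℕ) : ℤ) - ((i:ℕ):ℤ)).natAbs = 0 := by omega
        have e2 : ((((i+1):ℕ) : ℤ) - ((i:ℕ):ℤ)).natAbs = 1 := by omega
        rw [e1, e0, e2, pow_zero, pow_one]
        ring
      · obtain ⟨m, hm⟩ : ∃ m, j + m + 1 = i := ⟨i - j - 1, by omega⟩
        rw [Sval_off_int n a γ i j m (by omega) (by omega) hb]
        have e1 : ((((i-1):ℕ) : ℤ) - ((j:ℕ):ℤ)).natAbs = m := by omega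
        have e0 : (((i:ℕ) : ℤ) - ((j:ℕ):ℤ)).natAbs = m + 1 := by omega
        have e2 : ((((i+1):ℕ) : ℤ) - ((j:ℕ):ℤ)).natAbs = m + 2 := by omega
        rw [e1, e0, e2, pow_succ, pow_succ]
        ring

lemma abs_geom_sum (n i : ℕ) (γ : ℝ) (hi : i ≤ n) :
    ∑ j ∈ Finset.range (n + 1), γ ^ (((i : ℤ) - j).natAbs)
      = (∑ d ∈ Finset.range (i + 1), γ ^ d)
        + γ * ∑ d ∈ Finset.range (n - i), γ ^ d := by
  rw [Finset.range_eq_Ico, ← Finset.sum_Ico_consecutive _ (Nat.zero_le (i+1)) (by omega : i + 1 ≤ n + 1)]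
  congr 1
  · rw [← Finset.range_eq_Ico]
    have h1 : ∀ j ∈ Finset.range (i + 1),
        γ ^ (((i : ℤ) - j).natAbs) = γ ^ (i - j) := by
      intro j hj
      simp only [Finset.mem_range] at hj
      congr 1
      omega
    rw [Finset.sum_congr rfl h1, ← Finset.sum_range_reflect (fun d => γ ^ d) (i+1)]
    apply Finset.sum_congr rfl
    intro j hj
    simp only [Finset.mem_range] at hj
    congr 1
    all_goals omega
  · rw [Finset.sum_Ico_eq_sum_range]
    have h2 : n + 1 - (i + 1) = n - i := by omega
    rw [h2, Finset.mul_sum]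
    apply Finset.sum_congr rfl
    intro j hj
    have : (((i : ℤ) - (i + 1 + j : ℕ))).natAbs = j + 1 := by omega
    rw [this, pow_succ]
    ring

lemma rowsum (n : ℕ) (hn : 1 ≤ n) (γ : ℝ) (hg0 : 0 < γ) (hg1 : γ < 1) (i : ℕ) (hi : i ≤ n) :
    ∑ j ∈ Finset.range (n + 1),
      (if j = 0 ∨ j = n then γ ^ (((i : ℤ) - j).natAbs) / (1 + γ)
       else (1 - γ) / (1 + γ) * γ ^ (((i : ℤ) - j).natAbs)) = 1 := by
  have hsplit : ∀ j ∈ Finset.range (n + 1),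
      (if j = 0 ∨ j = n then γ ^ (((i : ℤ) - j).natAbs) / (1 + γ)
       else (1 - γ) / (1 + γ) * γ ^ (((i : ℤ) - j).natAbs))
      = (1 - γ) / (1 + γ) * γ ^ (((i : ℤ) - j).natAbs)
        + (if j = 0 then γ ^ (i + 1) / (1 + γ) else 0)
        + (if j = n then γ ^ (n - i + 1) / (1 + γ) else 0) := by
    intro j hj
    rcases eq_or_ne j 0 with rfl | hj0
    · rw [if_pos (Or.inl rfl), if_pos rfl, if_neg (by omega)]
      have : (((i : ℤ) - (0:ℕ))).natAbs = i := by omega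
      rw [this, pow_succ]
      ring
    · rcases eq_or_ne j n with rfl | hjn
      · rw [if_pos (Or.inr rfl), if_neg hj0, if_pos rfl]
        have : (((i : ℤ) - (j:ℕ))).natAbs = j - i := by omega
        rw [this, pow_succ]
        ring
      · rw [if_neg (by tauto), if_neg hj0, if_neg hjn]
        ring
  rw [Finset.sum_congr rfl hsplit, Finset.sum_add_distrib, Finset.sum_add_distrib,
      ← Finset.mul_sum, abs_geom_sum n i γ hi,
      Finset.sum_ite_eq' (Finset.range (n+1)) 0 (fun _ => γ ^ (i+1) / (1+γ)),
      Finset.sum_ite_eq' (Finset.range (n+1)) n (fun _ => γ ^ (n-i+1) / (1+γ)),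
      if_pos (by simp), if_pos (by simp)]
  have hγ1 : γ ≠ 1 := ne_of_lt hg1
  rw [geom_sum_eq hγ1, geom_sum_eq hγ1, pow_succ, pow_succ]
  have d1 : (1:ℝ) + γ ≠ 0 := by positivity
  have d2 : γ - 1 ≠ 0 := sub_ne_zero.mpr hγ1
  field_simp
  ring

lemma Sval_nonneg (n : ℕ) (a γ : ℝ) (ha : 0 < a) (hag : a ≤ γ) (hg : γ < 1) (i j : ℕ) :
    0 ≤ Sval n a γ i j := by
  have h1 : (0:ℝ) < 1 - a := by linarith
  have h2 : (0:ℝ) ≤ 1 - a * γ := by nlinarith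
  have h3 : (0:ℝ) ≤ γ - a := by linarith
  have h4 : (0:ℝ) ≤ γ := by linarith
  have h5 : (0:ℝ) ≤ 1 + a ^ 2 - 2 * a * γ := by nlinarith
  unfold Sval
  split_ifs
  · exact div_nonneg h2 h1.le
  · exact div_nonneg h5 (by positivity)
  · exact mul_nonneg (mul_nonneg h3 (pow_nonneg h4 _)) (inv_nonneg.mpr h1.le)
  · exact mul_nonneg (mul_nonneg h3 (pow_nonneg h4 _)) (div_nonneg h2 (by positivity))

/-- For `0 < α ≤ β < 1`, the `β`-geometric mechanism can be derived from the
`α`-geometric mechanism: there is a row-stochastic `T` with `G_{n,β} = G_{n,α}·T`. -/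
theorem geometric_derivable (n : ℕ) (hn : 1 ≤ n) (α β : ℝ)
    (h0 : 0 < α) (hab : α ≤ β) (h1 : β < 1)
    (Ga Gb : Matrix (Fin (n + 1)) (Fin (n + 1)) ℝ)
    (hGa : ∀ i j, Ga i j =
      if (j : ℕ) = 0 ∨ (j : ℕ) = n then α ^ ((i : ℤ) - (j : ℤ)).natAbs / (1 + α)
      else ((1 - α) / (1 + α)) * α ^ ((i : ℤ) - (j : ℤ)).natAbs)
    (hGb : ∀ i j, Gb i j =
      if (j : ℕ) = 0 ∨ (j : ℕ) = n then β ^ ((i : ℤ) - (j : ℤ)).natAbs / (1 + β)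
      else ((1 - β) / (1 + β)) * β ^ ((i : ℤ) - (j : ℤ)).natAbs) :
    ∃ T : Matrix (Fin (n + 1)) (Fin (n + 1)) ℝ,
      (∀ r r', 0 ≤ T r r') ∧ (∀ r, ∑ r', T r r' = 1) ∧ Gb = Ga * T := by
  have ha1 : α < 1 := lt_of_le_of_lt hab h1
  have hb0 : 0 < β := lt_of_lt_of_le h0 hab
  have hα1 : (1:ℝ) + α ≠ 0 := by positivity
  have hαm : (1:ℝ) - α ≠ 0 := by intro h; linarith [sub_eq_zero.mp h]
  set A : Matrix (Fin (n+1)) (Fin (n+1)) ℝ :=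
    Matrix.of (fun i k : Fin (n+1) => Aent n α (i : ℕ) (k : ℕ)) with hA
  -- generic product formula
  have hmul : ∀ (γ : ℝ) (G : Matrix (Fin (n+1)) (Fin (n+1)) ℝ),
      (∀ i j, G i j =
        if (j : ℕ) = 0 ∨ (j : ℕ) = n then γ ^ ((i : ℤ) - (j : ℤ)).natAbs / (1 + γ)
        else ((1 - γ) / (1 + γ)) * γ ^ ((i : ℤ) - (j : ℤ)).natAbs) →
      ∀ i j, (A * G) i j =
        (if (j : ℕ) = 0 ∨ (j : ℕ) = n then 1 / (1 + γ) else (1 - γ) / (1 + γ)) *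
          Sval n α γ (i : ℕ) (j : ℕ) := by
    intro γ G hG i j
    rw [Matrix.mul_apply]
    have step : ∀ k : Fin (n+1), A i k * G k j =
        (if (j : ℕ) = 0 ∨ (j : ℕ) = n then 1 / (1 + γ) else (1 - γ) / (1 + γ)) *
          ((fun m : ℕ => Aent n α (i : ℕ) m * γ ^ ((((m : ℕ) : ℤ) - ((j : ℕ) : ℤ)).natAbs))
            (k : ℕ)) := by
      intro k
      rw [hG k j]
      simp only [hA, Matrix.of_apply]
      split_ifs
      · ring
      · ring
    rw [Finset.sum_congr rfl (fun k _ => step k), ← Finset.mul_sum,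
        Fin.sum_univ_eq_sum_range
          (fun m : ℕ => Aent n α (i : ℕ) m * γ ^ ((((m : ℕ) : ℤ) - ((j : ℕ) : ℤ)).natAbs))
          (n+1),
        key_s14 n hn α γ (i : ℕ) (j : ℕ) i.is_le j.is_le]
  -- A * Ga = 1
  have hAGa : A * Ga = 1 := by
    ext i j
    rw [hmul α Ga hGa i j, Matrix.one_apply]
    by_cases hij : i = j
    · subst hij
      rw [if_pos rfl]
      by_cases hbd : (i : ℕ) = 0 ∨ (i : ℕ) = n
      · rw [if_pos hbd, Sval_diag_bd n α α _ _ rfl hbd]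
        field_simp
        ring
      · rw [if_neg hbd, Sval_diag_int n α α _ _ rfl hbd]
        field_simp
        ring
    · rw [if_neg hij]
      have hvij : (i : ℕ) ≠ (j : ℕ) := fun h => hij (Fin.ext h)
      have hpos : 0 < (((i : ℕ) : ℤ) - ((j : ℕ) : ℤ)).natAbs := by omega
      by_cases hbd : (i : ℕ) = 0 ∨ (i : ℕ) = n
      · rw [Sval_off_bd n α α (i : ℕ) (j : ℕ)
            ((((i : ℕ) : ℤ) - ((j : ℕ) : ℤ)).natAbs - 1) hvij (by omega) hbd]
        simp
      · rw [Sval_off_int n α α (i : ℕ) (j : ℕ)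
            ((((i : ℕ) : ℤ) - ((j : ℕ) : ℤ)).natAbs - 1) hvij (by omega) hbd]
        simp
  have hGaA : Ga * A = 1 := mul_eq_one_comm.mp hAGa
  -- row sums of Ga and Gb are 1
  have hrowG : ∀ (γ : ℝ), 0 < γ → γ < 1 →
      ∀ (G : Matrix (Fin (n+1)) (Fin (n+1)) ℝ),
      (∀ i j, G i j =
        if (j : ℕ) = 0 ∨ (j : ℕ) = n then γ ^ ((i : ℤ) - (j : ℤ)).natAbs / (1 + γ)
        else ((1 - γ) / (1 + γ)) * γ ^ ((i : ℤ) - (j : ℤ)).natAbs) →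
      ∀ k : Fin (n+1), ∑ j, G k j = 1 := by
    intro γ hγ0 hγ1 G hG k
    have step : ∀ j : Fin (n+1), G k j =
        (fun m : ℕ => if m = 0 ∨ m = n then γ ^ ((((k:ℕ):ℤ) - (m:ℤ)).natAbs) / (1 + γ)
          else (1 - γ) / (1 + γ) * γ ^ ((((k:ℕ):ℤ) - (m:ℤ)).natAbs)) (j : ℕ) := by
      intro j
      rw [hG k j]
    rw [Finset.sum_congr rfl (fun j _ => step j),
        Fin.sum_univ_eq_sum_range
          (fun m : ℕ => if m = 0 ∨ m = n then γ ^ ((((k:ℕ):ℤ) - (m:ℤ)).natAbs) / (1 + γ)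
            else (1 - γ) / (1 + γ) * γ ^ ((((k:ℕ):ℤ) - (m:ℤ)).natAbs)) (n+1),
        rowsum n hn γ hγ0 hγ1 (k : ℕ) k.is_le]
  have hrowGa := hrowG α h0 ha1 Ga hGa
  have hrowGb := hrowG β hb0 h1 Gb hGb
  refine ⟨A * Gb, ?_, ?_, ?_⟩
  · intro r r'
    rw [hmul β Gb hGb r r']
    have hc : 0 ≤ (if (r' : ℕ) = 0 ∨ (r' : ℕ) = n then 1 / (1 + β) else (1 - β) / (1 + β)) := by
      split_ifs
      · positivity
      · apply div_nonneg (by linarith) (by positivity)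
    exact mul_nonneg hc (Sval_nonneg n α β h0 hab h1 _ _)
  · intro r
    have e1 : ∑ j, (A * Gb) r j = ∑ k, A r k * ∑ j, Gb k j := by
      simp only [Matrix.mul_apply]
      rw [Finset.sum_comm]
      exact Finset.sum_congr rfl fun k _ => (Finset.mul_sum _ _ _).symm
    have e2 : ∑ j, (A * Ga) r j = ∑ k, A r k * ∑ j, Ga k j := by
      simp only [Matrix.mul_apply]
      rw [Finset.sum_comm]
      exact Finset.sum_congr rfl fun k _ => (Finset.mul_sum _ _ _).symm
    rw [e1]
    have : ∑ k, A r k * ∑ j, Gb k j = ∑ k, A r k * ∑ j, Ga k j := by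
      apply Finset.sum_congr rfl
      intro k _
      rw [hrowGa k, hrowGb k]
    rw [this, ← e2, hAGa]
    simp [Matrix.one_apply]
  · rw [← Matrix.mul_assoc, hGaA, Matrix.one_mul]
end

section
/- Characterization of derivability from the geometric mechanism: an (n+1)×(n+1) row-stochastic matrix M can be written as M = G_{n,α}·T for some row-stochastic matrix T if and only if every three consecutive entries x₁, x₂, x₃ in any column of M satisfy (1+α²)·x₂ - α·(x₁ + x₃) ≥ 0, and every column satisfies x₁ ≥ α·x₂ at the top (first two entries) and x_{n+1} ≥ α·x_n at the bottom. -/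
open Finset Matrix

noncomputable def Bmat (n : ℕ) (α : ℝ) : Matrix (Fin (n+1)) (Fin (n+1)) ℝ :=
  fun i k =>
    if (i : ℕ) = 0 then
      if (k : ℕ) = 0 then 1/(1-α) else if (k : ℕ) = 1 then -(α/(1-α)) else 0
    else if (i : ℕ) = n then
      if (k : ℕ) = n then 1/(1-α) else if (k : ℕ) = n-1 then -(α/(1-α)) else 0
    else
      if (k : ℕ) = (i : ℕ) then (1+α^2)/(1-α)^2
      else if (k : ℕ) + 1 = (i : ℕ) ∨ (k : ℕ) = (i : ℕ) + 1 then -(α/(1-α)^2)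
      else 0

lemma sum_B_zero (n : ℕ) (hn : 2 ≤ n) (α : ℝ) (f : Fin (n+1) → ℝ) :
    ∑ k, Bmat n α ⟨0, Nat.lt_succ_of_le (by omega)⟩ k * f k
      = (1/(1-α)) * f ⟨0, Nat.lt_succ_of_le (by omega)⟩ - (α/(1-α)) * f ⟨1, Nat.lt_succ_of_le (by omega)⟩ := by
  have h := Finset.sum_subset (Finset.subset_univ
      ({⟨0, by omega⟩, ⟨1, by omega⟩} : Finset (Fin (n+1))))
    (f := fun k => Bmat n α ⟨0, by omega⟩ k * f k) ?_
  · rw [← h, Finset.sum_pair (by simp [Fin.ext_iff])]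
    simp [Bmat]
    ring
  · intro x _ hx
    simp only [Finset.mem_insert, Finset.mem_singleton] at hx
    push_neg at hx
    have h1 : (x : ℕ) ≠ 0 := fun h => hx.1 (Fin.ext h)
    have h2 : (x : ℕ) ≠ 1 := fun h => hx.2 (Fin.ext h)
    simp [Bmat, h1, h2]

lemma sum_B_last (n : ℕ) (hn : 2 ≤ n) (α : ℝ) (f : Fin (n+1) → ℝ) :
    ∑ k, Bmat n α ⟨n, Nat.lt_succ_of_le (by omega)⟩ k * f k
      = (1/(1-α)) * f ⟨n, Nat.lt_succ_of_le (by omega)⟩ - (α/(1-α)) * f ⟨n-1, Nat.lt_succ_of_le (by omega)⟩ := by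
  have h := Finset.sum_subset (Finset.subset_univ
      ({⟨n, by omega⟩, ⟨n-1, by omega⟩} : Finset (Fin (n+1))))
    (f := fun k => Bmat n α ⟨n, by omega⟩ k * f k) ?_
  · rw [← h, Finset.sum_pair (by simp [Fin.ext_iff]; omega)]
    have hn0 : n ≠ 0 := by omega
    have hn1 : n - 1 ≠ n := by omega
    have hn2 : n - 1 ≠ 0 := by omega
    simp [Bmat, hn0, hn1, hn2]
    ring
  · intro x _ hx
    simp only [Finset.mem_insert, Finset.mem_singleton] at hx
    push_neg at hx
    have h1 : (x : ℕ) ≠ n := fun h => hx.1 (Fin.ext h)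
    have h2 : (x : ℕ) ≠ n - 1 := fun h => hx.2 (Fin.ext h)
    have h3 : ¬ ((x:ℕ) = 0 ∧ n = 0) := by omega
    simp [Bmat, h1, h2]
    intro h0
    exfalso; omega

lemma sum_B_mid (n : ℕ) (hn : 2 ≤ n) (α : ℝ) (m : ℕ) (hm : m + 2 ≤ n)
    (f : Fin (n+1) → ℝ) :
    ∑ k, Bmat n α ⟨m+1, Nat.lt_succ_of_le (by omega)⟩ k * f k
      = ((1+α^2)/(1-α)^2) * f ⟨m+1, Nat.lt_succ_of_le (by omega)⟩
        - (α/(1-α)^2) * (f ⟨m, Nat.lt_succ_of_le (by omega)⟩ + f ⟨m+2, Nat.lt_succ_of_le (by omega)⟩) := by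
  have h := Finset.sum_subset (Finset.subset_univ
      ({⟨m, by omega⟩, ⟨m+1, by omega⟩, ⟨m+2, by omega⟩} : Finset (Fin (n+1))))
    (f := fun k => Bmat n α ⟨m+1, by omega⟩ k * f k) ?_
  · rw [← h]
    rw [Finset.sum_insert (by simp [Fin.ext_iff]), Finset.sum_pair (by simp [Fin.ext_iff])]
    have h1 : m + 1 ≠ 0 := by omega
    have h2 : m + 1 ≠ n := by omega
    simp [Bmat, h1, h2]
    ring
  · intro x _ hx
    simp only [Finset.mem_insert, Finset.mem_singleton] at hx
    push_neg at hx
    have h1 : (x : ℕ) ≠ m := fun h => hx.1 (Fin.ext h)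
    have h2 : (x : ℕ) ≠ m+1 := fun h => hx.2.1 (Fin.ext h)
    have h3 : (x : ℕ) ≠ m+2 := fun h => hx.2.2 (Fin.ext h)
    have h4 : m + 1 ≠ 0 := by omega
    have h5 : m + 1 ≠ n := by omega
    simp [Bmat, h4, h5, h2]
    intro h0; exfalso; omega

lemma BG_eq_one (n : ℕ) (hn : 2 ≤ n) (α : ℝ) (h0 : 0 < α) (h1 : α < 1)
    (G : Matrix (Fin (n + 1)) (Fin (n + 1)) ℝ)
    (hG : ∀ i j, G i j =
      if (j : ℕ) = 0 ∨ (j : ℕ) = n then α ^ ((i : ℤ) - (j : ℤ)).natAbs / (1 + α)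
      else ((1 - α) / (1 + α)) * α ^ ((i : ℤ) - (j : ℤ)).natAbs) :
    Bmat n α * G = 1 := by
  have ha : (1 : ℝ) - α ≠ 0 := by linarith
  have hb : (1 : ℝ) + α ≠ 0 := by linarith
  have hG' : ∀ i j, G i j =
      (if (j : ℕ) = 0 ∨ (j : ℕ) = n then 1/(1+α) else (1-α)/(1+α))
        * α ^ ((i : ℤ) - (j : ℤ)).natAbs := by
    intro i j
    rw [hG]
    split <;> ring
  ext i j
  rw [Matrix.mul_apply, Matrix.one_apply]
  by_cases hi0 : (i : ℕ) = 0
  · have : i = ⟨0, by omega⟩ := Fin.ext hi0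
    rw [this]
    rw [sum_B_zero n hn, hG', hG']
    rcases Nat.eq_zero_or_pos (j : ℕ) with hj | hj
    · have hjeq : (⟨0, by omega⟩ : Fin (n+1)) = j := Fin.ext (by simpa using hj.symm)
      rw [if_pos hjeq]
      have e0 : ((((⟨0, by omega⟩ : Fin (n+1)) : ℕ) : ℤ) - ((j:ℕ):ℤ)).natAbs = 0 := by
        simp only [Fin.val_mk]; omega
      have e1 : ((((⟨1, by omega⟩ : Fin (n+1)) : ℕ) : ℤ) - ((j:ℕ):ℤ)).natAbs = 1 := by
        simp; omega
      rw [e0, e1, if_pos (Or.inl hj)]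
      field_simp
      ring
    · obtain ⟨d, hd⟩ : ∃ d, (j:ℕ) = d + 1 := ⟨(j:ℕ) - 1, by omega⟩
      have hjne : (⟨0, by omega⟩ : Fin (n+1)) ≠ j := by
        intro h; rw [← h] at hj; simp at hj
      rw [if_neg hjne]
      have e0 : ((((⟨0, by omega⟩ : Fin (n+1)) : ℕ) : ℤ) - ((j:ℕ):ℤ)).natAbs = d + 1 := by
        simp; omega
      have e1 : ((((⟨1, by omega⟩ : Fin (n+1)) : ℕ) : ℤ) - ((j:ℕ):ℤ)).natAbs = d := by
        simp; omega
      rw [e0, e1, pow_succ]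
      ring
  · by_cases hin : (i : ℕ) = n
    · have : i = ⟨n, by omega⟩ := Fin.ext hin
      rw [this]
      rw [sum_B_last n hn, hG', hG']
      by_cases hj : (j : ℕ) = n
      · have hjeq : (⟨n, by omega⟩ : Fin (n+1)) = j := Fin.ext (by simpa using hj.symm)
        rw [if_pos hjeq]
        have e0 : ((((⟨n, by omega⟩ : Fin (n+1)) : ℕ) : ℤ) - ((j:ℕ):ℤ)).natAbs = 0 := by
          simp; omega
        have e1 : ((((⟨n-1, by omega⟩ : Fin (n+1)) : ℕ) : ℤ) - ((j:ℕ):ℤ)).natAbs = 1 := by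
          simp; omega
        rw [e0, e1, if_pos (Or.inr hj)]
        field_simp
        ring
      · have hjlt : (j : ℕ) ≤ n - 1 := by have := j.isLt; omega
        have hjne : (⟨n, by omega⟩ : Fin (n+1)) ≠ j := by
          intro h
          apply hj
          rw [← h]
        rw [if_neg hjne]
        have e0 : ((((⟨n, by omega⟩ : Fin (n+1)) : ℕ) : ℤ) - ((j:ℕ):ℤ)).natAbs
            = (n - 1 - (j:ℕ)) + 1 := by simp; omega
        have e1 : ((((⟨n-1, by omega⟩ : Fin (n+1)) : ℕ) : ℤ) - ((j:ℕ):ℤ)).natAbs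
            = n - 1 - (j:ℕ) := by simp; omega
        rw [e0, e1, pow_succ]
        ring
    · obtain ⟨m, hm⟩ : ∃ m, (i:ℕ) = m + 1 := ⟨(i:ℕ) - 1, by omega⟩
      have hm2 : m + 2 ≤ n := by have := i.isLt; omega
      have : i = ⟨m+1, by omega⟩ := Fin.ext hm
      rw [this]
      rw [sum_B_mid n hn α m hm2, hG', hG', hG']
      simp only [Fin.val_mk]
      rcases lt_trichotomy (j : ℕ) (m+1) with hj | hj | hj
      · have hjne : (⟨m+1, by omega⟩ : Fin (n+1)) ≠ j := by
          intro h; rw [← h] at hj; simp at hj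
        rw [if_neg hjne]
        set d := m - (j:ℕ) with hd
        have e1 : (((m:ℤ)+1) - ((j:ℕ):ℤ)).natAbs = d + 1 := by omega
        have e0 : ((m:ℤ) - ((j:ℕ):ℤ)).natAbs = d := by omega
        have e2 : (((m:ℤ)+2) - ((j:ℕ):ℤ)).natAbs = d + 2 := by omega
        push_cast
        rw [e1, e0, e2, pow_succ, pow_succ, pow_succ]
        ring
      · have hjeq : (⟨m+1, by omega⟩ : Fin (n+1)) = j := Fin.ext (by simpa using hj.symm)
        rw [if_pos hjeq]
        have hcond : ¬ ((j:ℕ) = 0 ∨ (j:ℕ) = n) := by omega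
        rw [if_neg hcond]
        have e1 : (((m:ℤ)+1) - ((j:ℕ):ℤ)).natAbs = 0 := by omega
        have e0 : ((m:ℤ) - ((j:ℕ):ℤ)).natAbs = 1 := by omega
        have e2 : (((m:ℤ)+2) - ((j:ℕ):ℤ)).natAbs = 1 := by omega
        push_cast
        rw [e1, e0, e2]
        field_simp
        ring
      · have hjne : (⟨m+1, by omega⟩ : Fin (n+1)) ≠ j := by
          intro h; rw [← h] at hj; simp at hj
        rw [if_neg hjne]
        set d := (j:ℕ) - (m+2) with hd
        have e1 : (((m:ℤ)+1) - ((j:ℕ):ℤ)).natAbs = d + 1 := by omega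
        have e0 : ((m:ℤ) - ((j:ℕ):ℤ)).natAbs = d + 2 := by omega
        have e2 : (((m:ℤ)+2) - ((j:ℕ):ℤ)).natAbs = d := by omega
        push_cast
        rw [e1, e0, e2, pow_succ, pow_succ, pow_succ]
        ring

lemma B_row_sum (n : ℕ) (hn : 2 ≤ n) (α : ℝ) (h0 : 0 < α) (h1 : α < 1)
    (i : Fin (n+1)) : ∑ k, Bmat n α i k = 1 := by
  have ha : (1 : ℝ) - α ≠ 0 := by linarith
  have key : ∑ k, Bmat n α i k = ∑ k, Bmat n α i k * (fun _ : Fin (n+1) => (1:ℝ)) k := by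
    simp
  rw [key]
  by_cases hi0 : (i : ℕ) = 0
  · have : i = ⟨0, by omega⟩ := Fin.ext hi0
    rw [this, sum_B_zero n hn]
    field_simp
  · by_cases hin : (i : ℕ) = n
    · have : i = ⟨n, by omega⟩ := Fin.ext hin
      rw [this, sum_B_last n hn]
      field_simp
    · obtain ⟨m, hm⟩ : ∃ m, (i:ℕ) = m + 1 := ⟨(i:ℕ) - 1, by omega⟩
      have hm2 : m + 2 ≤ n := by have := i.isLt; omega
      have : i = ⟨m+1, by omega⟩ := Fin.ext hm
      rw [this, sum_B_mid n hn α m hm2]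
      field_simp
      ring
/-- Characterization of mechanisms derivable from the geometric mechanism: a
row-stochastic `M` equals `G_{n,α}·T` for some row-stochastic `T` iff every
three consecutive entries `x₁, x₂, x₃` of every column of `M` satisfy
`(1+α²)·x₂ - α·(x₁+x₃) ≥ 0`, the top two entries of every column satisfy
`x₁ ≥ α·x₂`, and the bottom two satisfy `x_{n+1} ≥ α·x_n`. -/
theorem derivable_from_geometric_iff (n : ℕ) (hn : 2 ≤ n)
    (α : ℝ) (h0 : 0 < α) (h1 : α < 1)
    (G M : Matrix (Fin (n + 1)) (Fin (n + 1)) ℝ)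
    (hG : ∀ i j, G i j =
      if (j : ℕ) = 0 ∨ (j : ℕ) = n then α ^ ((i : ℤ) - (j : ℤ)).natAbs / (1 + α)
      else ((1 - α) / (1 + α)) * α ^ ((i : ℤ) - (j : ℤ)).natAbs)
    (hMnn : ∀ i j, 0 ≤ M i j) (hMrow : ∀ i, ∑ j, M i j = 1) :
    (∃ T : Matrix (Fin (n + 1)) (Fin (n + 1)) ℝ,
        (∀ r r', 0 ≤ T r r') ∧ (∀ r, ∑ r', T r r' = 1) ∧ M = G * T) ↔
    (∀ j : Fin (n + 1),
      (∀ i : ℕ, (h : i + 2 ≤ n) →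
        0 ≤ (1 + α ^ 2) * M ⟨i + 1, by omega⟩ j -
            α * (M ⟨i, by omega⟩ j + M ⟨i + 2, by omega⟩ j)) ∧
      α * M ⟨1, by omega⟩ j ≤ M ⟨0, by omega⟩ j ∧
      α * M ⟨n - 1, by omega⟩ j ≤ M ⟨n, by omega⟩ j) := by
  have ha : (0:ℝ) < 1 - α := by linarith
  have hBG := BG_eq_one n hn α h0 h1 G hG
  have hGB : G * Bmat n α = 1 := mul_eq_one_comm.mp hBG
  constructor
  · rintro ⟨T, hTnn, -, hMeq⟩
    have hT : Bmat n α * M = T := by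
      rw [hMeq, ← Matrix.mul_assoc, hBG, Matrix.one_mul]
    intro j
    refine ⟨?_, ?_, ?_⟩
    · intro i hi
      have h := hTnn ⟨i+1, by omega⟩ j
      rw [← hT, Matrix.mul_apply, sum_B_mid n hn α i hi] at h
      have key : ((1+α^2)/(1-α)^2) * M ⟨i+1, by omega⟩ j
            - (α/(1-α)^2) * (M ⟨i, by omega⟩ j + M ⟨i+2, by omega⟩ j)
          = ((1 + α ^ 2) * M ⟨i + 1, by omega⟩ j -
            α * (M ⟨i, by omega⟩ j + M ⟨i + 2, by omega⟩ j)) / (1-α)^2 := by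
        ring
      rw [key] at h
      calc (0:ℝ) ≤ (((1 + α ^ 2) * M ⟨i + 1, by omega⟩ j -
            α * (M ⟨i, by omega⟩ j + M ⟨i + 2, by omega⟩ j)) / (1-α)^2) * (1-α)^2 :=
              mul_nonneg h (sq_nonneg _)
        _ = _ := by field_simp
    · have h := hTnn ⟨0, by omega⟩ j
      rw [← hT, Matrix.mul_apply, sum_B_zero n hn] at h
      have key : (1/(1-α)) * M ⟨0, by omega⟩ j - (α/(1-α)) * M ⟨1, by omega⟩ j
          = (M ⟨0, by omega⟩ j - α * M ⟨1, by omega⟩ j) / (1-α) := by ring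
      rw [key] at h
      have h2 := mul_nonneg h (le_of_lt ha)
      rw [div_mul_cancel₀ _ (ne_of_gt ha)] at h2
      linarith
    · have h := hTnn ⟨n, by omega⟩ j
      rw [← hT, Matrix.mul_apply, sum_B_last n hn] at h
      have key : (1/(1-α)) * M ⟨n, by omega⟩ j - (α/(1-α)) * M ⟨n-1, by omega⟩ j
          = (M ⟨n, by omega⟩ j - α * M ⟨n-1, by omega⟩ j) / (1-α) := by ring
      rw [key] at h
      have h2 := mul_nonneg h (le_of_lt ha)
      rw [div_mul_cancel₀ _ (ne_of_gt ha)] at h2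
      linarith
  · intro hcond
    refine ⟨Bmat n α * M, ?_, ?_, ?_⟩
    · intro r r'
      rw [Matrix.mul_apply]
      by_cases hi0 : (r : ℕ) = 0
      · have : r = ⟨0, by omega⟩ := Fin.ext hi0
        rw [this, sum_B_zero n hn]
        have key : (1/(1-α)) * M ⟨0, by omega⟩ r' - (α/(1-α)) * M ⟨1, by omega⟩ r'
            = (M ⟨0, by omega⟩ r' - α * M ⟨1, by omega⟩ r') / (1-α) := by ring
        rw [key]
        have := (hcond r').2.1
        apply div_nonneg (by linarith) (le_of_lt ha)
      · by_cases hin : (r : ℕ) = n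
        · have : r = ⟨n, by omega⟩ := Fin.ext hin
          rw [this, sum_B_last n hn]
          have key : (1/(1-α)) * M ⟨n, by omega⟩ r' - (α/(1-α)) * M ⟨n-1, by omega⟩ r'
              = (M ⟨n, by omega⟩ r' - α * M ⟨n-1, by omega⟩ r') / (1-α) := by ring
          rw [key]
          have := (hcond r').2.2
          apply div_nonneg (by linarith) (le_of_lt ha)
        · obtain ⟨m, hm⟩ : ∃ m, (r:ℕ) = m + 1 := ⟨(r:ℕ) - 1, by omega⟩
          have hm2 : m + 2 ≤ n := by have := r.isLt; omega
          have : r = ⟨m+1, by omega⟩ := Fin.ext hm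
          rw [this, sum_B_mid n hn α m hm2]
          have key : ((1+α^2)/(1-α)^2) * M ⟨m+1, by omega⟩ r'
                - (α/(1-α)^2) * (M ⟨m, by omega⟩ r' + M ⟨m+2, by omega⟩ r')
              = ((1 + α ^ 2) * M ⟨m + 1, by omega⟩ r' -
                α * (M ⟨m, by omega⟩ r' + M ⟨m + 2, by omega⟩ r')) / (1-α)^2 := by
            ring
          rw [key]
          have := (hcond r').1 m hm2
          apply div_nonneg (by linarith) (sq_nonneg _)
    · intro r
      simp only [Matrix.mul_apply]
      rw [Finset.sum_comm]
      simp only [← Finset.mul_sum, hMrow, mul_one]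
      exact B_row_sum n hn α h0 h1 r
    · rw [← Matrix.mul_assoc, hGB, Matrix.one_mul]
end

section
/- There exists a 1/2-differentially private row-stochastic mechanism M on {0,1,2,3} that cannot be derived from the geometric mechanism G_{3,1/2} by any row-stochastic post-processing. Specifically, the matrix M with rows (1/9, 2/9, 4/9, 2/9), (2/9, 1/9, 2/9, 4/9), (4/9, 2/9, 1/9, 2/9), (13/18, 1/9, 1/18, 1/9) is 1/2-differentially private, but the entries M(0,1)=2/9, M(1,1)=1/9, M(2,1)=2/9 violate the condition (1+α²)·x₂ - α·(x₁+x₃) ≥ 0 for α = 1/2, so no row-stochastic T satisfies M = G_{3,1/2}·T. -/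
/-- A `1/2`-differentially private mechanism on `{0,1,2,3}` that cannot be
derived from the geometric mechanism `G_{3,1/2}` by any row-stochastic
post-processing: the condition `(1+α²)x₂ - α(x₁+x₃) ≥ 0` fails in column 1. -/
theorem not_derivable_example
    (G M : Matrix (Fin 4) (Fin 4) ℝ)
    (hG : ∀ i j, G i j =
      if (j : ℕ) = 0 ∨ (j : ℕ) = 3 then
        (1/2 : ℝ) ^ ((i : ℤ) - (j : ℤ)).natAbs / (1 + 1/2)
      else ((1 - 1/2) / (1 + 1/2)) * (1/2 : ℝ) ^ ((i : ℤ) - (j : ℤ)).natAbs)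
    (hM : M = !![1/9, 2/9, 4/9, 2/9;
                 2/9, 1/9, 2/9, 4/9;
                 4/9, 2/9, 1/9, 2/9;
                 13/18, 1/9, 1/18, 1/9]) :
    (∀ (i : Fin 3) (r : Fin 4),
      (1/2 : ℝ) * M i.castSucc r ≤ M i.succ r ∧
      M i.succ r ≤ 2 * M i.castSucc r) ∧
    (1 + (1/2 : ℝ) ^ 2) * M 1 1 - (1/2) * (M 0 1 + M 2 1) < 0 ∧
    ¬ ∃ T : Matrix (Fin 4) (Fin 4) ℝ,
        (∀ r r', 0 ≤ T r r') ∧ (∀ r, ∑ r', T r r' = 1) ∧ M = G * T := by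
  subst hM
  refine ⟨?_, ?_, ?_⟩
  · intro i r
    fin_cases i <;> fin_cases r <;>
      norm_num [Fin.castSucc, Fin.castAdd, Fin.castLE, Fin.succ,
        Matrix.cons_val_zero, Matrix.cons_val_one, Matrix.head_cons,
        Matrix.cons_val', Matrix.cons_val_succ, Matrix.cons_val_fin_one]
  · norm_num [Matrix.cons_val_two, Matrix.vecHead, Matrix.vecTail, Matrix.cons_val_succ, Matrix.cons_val_zero]
  · rintro ⟨T, hT0, -, hMT⟩
    have h1 : ∀ i : Fin 4, (!![(1:ℝ)/9, 2/9, 4/9, 2/9;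
                 2/9, 1/9, 2/9, 4/9;
                 4/9, 2/9, 1/9, 2/9;
                 13/18, 1/9, 1/18, 1/9] : Matrix (Fin 4) (Fin 4) ℝ) i 1
        = ∑ j : Fin 4, G i j * T j 1 := by
      intro i
      rw [hMT, Matrix.mul_apply]
    have e0 := h1 0
    have e1 := h1 1
    have e2 := h1 2
    rw [Fin.sum_univ_four, hG 0 0, hG 0 1, hG 0 2, hG 0 3] at e0
    rw [Fin.sum_univ_four, hG 1 0, hG 1 1, hG 1 2, hG 1 3] at e1
    rw [Fin.sum_univ_four, hG 2 0, hG 2 1, hG 2 2, hG 2 3] at e2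
    have h3 : ((3 : Fin 4) : ℕ) = 3 := rfl
    have h0 : ((0 : Fin 4) : ℕ) = 0 := rfl
    simp only [h3, h0] at e0 e1 e2
    norm_num [Matrix.cons_val_two, Matrix.vecHead, Matrix.vecTail, Matrix.cons_val_succ, Matrix.cons_val_zero] at e0 e1 e2
    have hT11 := hT0 1 1
    nlinarith [e0, e1, e2, hT11]
end

section
/- Infeasibility argument: suppose real numbers a, b, b', b'', c, α with 0 < α < 1 satisfy a + b + c = 1, α·a + b' + c/α = 1, a, b, c, b', b'' ≥ 0, and (1+α²)·b' - α·(b + b'') < 0. Then α²·a + b'' + c/α² > 1. -/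
/-- Infeasibility argument: if `a + b + c = 1`, `α·a + b' + c/α = 1`, all of
`a, b, c, b', b''` are nonnegative, and `(1+α²)·b' - α·(b + b'') < 0`, then
`α²·a + b'' + c/α² > 1`. -/
theorem infeasibility (α a b b' b'' c : ℝ) (h0 : 0 < α) (h1 : α < 1)
    (hrow1 : a + b + c = 1) (hrow2 : α * a + b' + c / α = 1)
    (ha : 0 ≤ a) (hb : 0 ≤ b) (hc : 0 ≤ c) (hb' : 0 ≤ b') (hb'' : 0 ≤ b'')
    (hneg : (1 + α ^ 2) * b' - α * (b + b'') < 0) :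
    1 < α ^ 2 * a + b'' + c / α ^ 2 := by
  have hne : α ≠ 0 := ne_of_gt h0
  have h2 : α ^ 2 * a + α * b' + c = α := by
    field_simp at hrow2; nlinarith [hrow2]
  have hkey : α ^ 4 * a + α ^ 2 * b'' + c - α ^ 2
      = α * (1 - α) ^ 2 - α * ((1 + α ^ 2) * b' - α * (b + b'')) := by
    nlinarith [h2, hrow1]
  have hpos : 0 < α ^ 4 * a + α ^ 2 * b'' + c - α ^ 2 := by
    rw [hkey]; nlinarith
  rw [show (1:ℝ) < α ^ 2 * a + b'' + c / α ^ 2 ↔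
      α ^ 2 * 1 < α ^ 2 * (α ^ 2 * a + b'' + c / α ^ 2) from
      (mul_lt_mul_iff_right₀ (by positivity)).symm]
  field_simp
  nlinarith [hpos]
end
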